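/- arXiv:1811.02989 — 4 statements merged into one kernel-verified Lean document; each statement's English description precedes it below -/
import Mathlib

section
/- Let E be a real normed vector space, n a natural number, and ε > 0. Let f : [0,ε) → ℝ be of class C^{n+1} and set r̂(r) = e^{f(r)} r. Suppose u : (0,ε) → E admits, as r → 0⁺, the two expansions u(r) = Σ_{k=1}^{n} (U_k/k!) r^k + (P/(n+1)!) r^{n+1} log r + O(r^{n+1}) and u(r) = Σ_{k=1}^{n} (Û_k/k!) r̂(r)^k + (P̂/(n+1)!) r̂(r)^{n+1} log r̂(r) + O(r^{n+1}), for some vectors U_1, …, U_n, P, Û_1, …, Û_n, P̂ ∈ E. Then P̂ = e^{-(n+1) f(0)} P. -/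
open Filter Topology Asymptotics Finset

section Aux

variable {E : Type*} [NormedAddCommGroup E] [NormedSpace ℝ E]

/-- A function of the form `r ↦ ∑_{j=1}^m r^j • A j`. -/
def IsPolyFun (m : ℕ) (F : ℝ → E) : Prop :=
  ∃ A : ℕ → E, ∀ r, F r = ∑ j ∈ Icc 1 m, r ^ j • A j

lemma isPolyFun_monomial (m e : ℕ) (c : ℝ) (v : E) (h1 : 1 ≤ e) (h2 : e ≤ m) :
    IsPolyFun m (fun r => (c * r ^ e) • v) := by
  classical
  refine ⟨fun j => if j = e then c • v else 0, fun r => ?_⟩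
  rw [Finset.sum_eq_single e]
  · simp [smul_smul, mul_comm]
  · intro b _ hb; simp [hb]
  · intro he; exact absurd (Finset.mem_Icc.mpr ⟨h1, h2⟩) he

lemma IsPolyFun.add {m : ℕ} {F G : ℝ → E} (hF : IsPolyFun m F) (hG : IsPolyFun m G) :
    IsPolyFun m (fun r => F r + G r) := by
  obtain ⟨A, hA⟩ := hF; obtain ⟨B, hB⟩ := hG
  exact ⟨fun j => A j + B j, fun r => by
    simp [hA, hB, smul_add, Finset.sum_add_distrib]⟩

lemma IsPolyFun.sub {m : ℕ} {F G : ℝ → E} (hF : IsPolyFun m F) (hG : IsPolyFun m G) :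
    IsPolyFun m (fun r => F r - G r) := by
  obtain ⟨A, hA⟩ := hF; obtain ⟨B, hB⟩ := hG
  exact ⟨fun j => A j - B j, fun r => by
    simp [hA, hB, smul_sub, Finset.sum_sub_distrib]⟩

lemma isPolyFun_sum {ι : Type*} (s : Finset ι) (m : ℕ) (F : ι → ℝ → E)
    (h : ∀ i ∈ s, IsPolyFun m (F i)) : IsPolyFun m (fun r => ∑ i ∈ s, F i r) := by
  classical
  induction s using Finset.induction_on with
  | empty => exact ⟨fun _ => 0, by simp⟩
  | @insert a s hx ih =>
      have h1 := h a (Finset.mem_insert_self a s)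
      have h2 := ih (fun i hi => h i (Finset.mem_insert_of_mem hi))
      have h3 := h1.add h2
      simpa only [Finset.sum_insert hx] using h3

lemma pow_succ_isLittleO (m : ℕ) :
    (fun r : ℝ => r ^ (m + 1)) =o[𝓝[>] (0 : ℝ)] fun r => r ^ m := by
  have h1 : (fun r : ℝ => r) =o[𝓝[>] (0 : ℝ)] (fun _ => (1 : ℝ)) := by
    rw [isLittleO_one_iff]
    exact tendsto_nhdsWithin_of_tendsto_nhds (by exact (tendsto_id : Tendsto id (𝓝 (0:ℝ)) _))
  have h2 := (isBigO_refl (fun r : ℝ => r ^ m) (𝓝[>] (0 : ℝ))).mul_isLittleO h1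
  simpa [pow_succ] using h2

lemma log_pow_isLittleO (m : ℕ) :
    (fun r : ℝ => r ^ (m + 1) * Real.log r) =o[𝓝[>] (0 : ℝ)] fun r => r ^ m := by
  have h1 : (fun r : ℝ => r * Real.log r) =o[𝓝[>] (0 : ℝ)] (fun _ => (1 : ℝ)) := by
    rw [isLittleO_one_iff]
    have h := Real.continuous_mul_log.tendsto 0
    simp only [Real.log_zero, mul_zero] at h
    exact tendsto_nhdsWithin_of_tendsto_nhds h
  have h2 := (isBigO_refl (fun r : ℝ => r ^ m) (𝓝[>] (0 : ℝ))).mul_isLittleO h1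
  have h3 : (fun r : ℝ => r ^ (m + 1) * Real.log r)
      = fun r : ℝ => r ^ m * (r * Real.log r) := by
    funext r; ring
  rw [h3]
  simpa using h2

lemma isLittleO_smul_const {φ g : ℝ → ℝ} {l : Filter ℝ} (h : φ =o[l] g) (v : E) :
    (fun r => φ r • v) =o[l] g := by
  rcases eq_or_ne v 0 with rfl | hv
  · simpa using (isLittleO_zero g l : (fun _ : ℝ => (0 : E)) =o[l] g)
  rw [isLittleO_iff] at h ⊢
  intro c hc
  have hvp : 0 < ‖v‖ := norm_pos_iff.mpr hv
  filter_upwards [h (div_pos hc hvp)] with r hr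
  rw [norm_smul]
  calc ‖φ r‖ * ‖v‖ ≤ c / ‖v‖ * ‖g r‖ * ‖v‖ := by
        exact mul_le_mul_of_nonneg_right hr hvp.le
    _ = c * ‖g r‖ := by field_simp

lemma isBigO_smul_const {φ g : ℝ → ℝ} {l : Filter ℝ} (h : φ =O[l] g) (v : E) :
    (fun r => φ r • v) =O[l] g := by
  obtain ⟨C, hC⟩ := h.bound
  rw [isBigO_iff]
  refine ⟨C * ‖v‖, ?_⟩
  filter_upwards [hC] with r hr
  rw [norm_smul]
  calc ‖φ r‖ * ‖v‖ ≤ C * ‖g r‖ * ‖v‖ := mul_le_mul_of_nonneg_right hr (norm_nonneg v)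
    _ = C * ‖v‖ * ‖g r‖ := by ring

lemma eq_zero_of_smul_pow_isLittleO {m : ℕ} {v : E}
    (h : (fun r : ℝ => r ^ m • v) =o[𝓝[>] (0 : ℝ)] fun r => r ^ m) : v = 0 := by
  by_contra hv
  have hvp : 0 < ‖v‖ := norm_pos_iff.mpr hv
  have hpos : 0 < ‖v‖ / 2 := by positivity
  obtain ⟨r, hle, hr⟩ := ((h.def hpos).and self_mem_nhdsWithin).exists
  have hrp : (0 : ℝ) < r := hr
  rw [norm_smul] at hle
  have hrm : 0 < ‖r ^ m‖ := by
    rw [Real.norm_eq_abs]; positivity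
  nlinarith [hle, hrm, hvp]

lemma coeffs_eq_zero (m : ℕ) (A : ℕ → E)
    (h : (fun r : ℝ => ∑ j ∈ Icc 1 m, r ^ j • A j) =o[𝓝[>] (0 : ℝ)] fun r => r ^ m) :
    ∀ j ∈ Icc 1 m, A j = 0 := by
  induction m with
  | zero => intro j hj; simp at hj
  | succ m ih =>
    intro j hj
    have hsplit : ∀ r : ℝ, ∑ j ∈ Icc 1 (m + 1), r ^ j • A j
        = (∑ j ∈ Icc 1 m, r ^ j • A j) + r ^ (m + 1) • A (m + 1) := by
      intro r
      rw [← Finset.sum_Icc_succ_top (by omega : 1 ≤ m + 1)]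
    have hmono : (fun r : ℝ => r ^ (m + 1)) =O[𝓝[>] (0 : ℝ)] fun r => r ^ m :=
      (pow_succ_isLittleO m).isBigO
    have htop : (fun r : ℝ => r ^ (m + 1) • A (m + 1)) =o[𝓝[>] (0 : ℝ)] fun r => r ^ m :=
      isLittleO_smul_const (pow_succ_isLittleO m) (A (m + 1))
    have hlow : (fun r : ℝ => ∑ j ∈ Icc 1 m, r ^ j • A j) =o[𝓝[>] (0 : ℝ)]
        fun r => r ^ m := by
      have h4 := (h.trans_isBigO hmono).sub htop
      refine h4.congr' (Eventually.of_forall fun r => ?_) EventuallyEq.rfl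
      dsimp only
      rw [hsplit r, add_sub_cancel_right]
    have hlow0 := ih hlow
    rcases Finset.mem_Icc.mp hj with ⟨hj1, hj2⟩
    rcases Nat.lt_or_ge j (m + 1) with hlt | hge
    · exact hlow0 j (Finset.mem_Icc.mpr ⟨hj1, by omega⟩)
    · have hje : j = m + 1 := by omega
      subst hje
      have htop2 : (fun r : ℝ => r ^ (m + 1) • A (m + 1)) =o[𝓝[>] (0 : ℝ)]
          fun r => r ^ (m + 1) := by
        refine h.congr' (Eventually.of_forall fun r => ?_) EventuallyEq.rfl
        dsimp only
        rw [hsplit r]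
        rw [Finset.sum_congr rfl fun i hi => by rw [hlow0 i hi, smul_zero]]
        simp
      exact eq_zero_of_smul_pow_isLittleO htop2

lemma log_coeff_zero (m : ℕ) (F : ℝ → E) (B : E) (hF : IsPolyFun m F)
    (h : (fun r => F r + (r ^ (m + 1) * Real.log r) • B) =O[𝓝[>] (0 : ℝ)]
      fun r => r ^ (m + 1)) :
    B = 0 := by
  obtain ⟨A, hA⟩ := hF
  have hlogo : (fun r : ℝ => (r ^ (m + 1) * Real.log r) • B) =o[𝓝[>] (0 : ℝ)]
      fun r => r ^ m := isLittleO_smul_const (log_pow_isLittleO m) B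
  have hOo : (fun r : ℝ => F r + (r ^ (m + 1) * Real.log r) • B) =o[𝓝[>] (0 : ℝ)]
      fun r => r ^ m := h.trans_isLittleO (pow_succ_isLittleO m)
  have hFo : F =o[𝓝[>] (0 : ℝ)] fun r : ℝ => r ^ m := by
    have h4 := hOo.sub hlogo
    refine h4.congr' (Eventually.of_forall fun r => ?_) EventuallyEq.rfl
    dsimp only
    rw [add_sub_cancel_right]
  have hFeq : F = fun r => ∑ j ∈ Icc 1 m, r ^ j • A j := funext hA
  rw [hFeq] at hFo
  have hzero := coeffs_eq_zero m A hFo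
  have hFzero : ∀ r, F r = 0 := by
    intro r
    rw [hA]
    exact Finset.sum_eq_zero fun j hj => by rw [hzero j hj, smul_zero]
  have hB : (fun r : ℝ => (r ^ (m + 1) * Real.log r) • B) =O[𝓝[>] (0 : ℝ)]
      fun r => r ^ (m + 1) := by
    have h5 : (fun r => F r + (r ^ (m + 1) * Real.log r) • B)
        = fun r : ℝ => (r ^ (m + 1) * Real.log r) • B := by
      funext r; rw [hFzero r, zero_add]
    rwa [h5] at h
  by_contra hBne
  have hBpos : 0 < ‖B‖ := norm_pos_iff.mpr hBne
  obtain ⟨C, hC⟩ := hB.bound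
  have hlogb : ∀ᶠ r in 𝓝[>] (0 : ℝ), Real.log r < -(C / ‖B‖ + 1) :=
    Real.tendsto_log_nhdsGT_zero.eventually (eventually_lt_atBot _)
  obtain ⟨r, ⟨hr1, hr2⟩, hr3⟩ := ((hC.and hlogb).and self_mem_nhdsWithin).exists
  have hr0 : (0 : ℝ) < r := hr3
  have hrp : (0 : ℝ) < r ^ (m + 1) := by positivity
  rw [norm_smul, Real.norm_eq_abs (r ^ (m + 1) * Real.log r), abs_mul,
    abs_of_pos hrp, Real.norm_eq_abs (r ^ (m + 1)), abs_of_pos hrp] at hr1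
  -- hr1 : r^(m+1) * |log r| * ‖B‖ ≤ C * r^(m+1)
  have h5' : (|Real.log r| * ‖B‖) * r ^ (m + 1) ≤ C * r ^ (m + 1) := by nlinarith [hr1]
  have h5 : |Real.log r| * ‖B‖ ≤ C := le_of_mul_le_mul_right h5' hrp
  have h6 : C / ‖B‖ + 1 < |Real.log r| := by
    have : C / ‖B‖ + 1 < -Real.log r := by linarith
    linarith [neg_le_abs (Real.log r)]
  have h7 : (C / ‖B‖ + 1) * ‖B‖ = C + ‖B‖ := by field_simp
  nlinarith [mul_lt_mul_of_pos_right h6 hBpos]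

end Aux

/-- CR covariance of the log-term coefficient: if `u` admits the expansion
`u(r) = Σ_{k=1}^n (U_k/k!) r^k + (P/(n+1)!) r^{n+1} log r + O(r^{n+1})` and also
the analogous expansion in the rescaled variable `r̂ = e^{f} r`, then the two
log coefficients are related by `P̂ = e^{-(n+1) f(0)} P`. -/
theorem log_coeff_conformal_covariance
    {E : Type*} [NormedAddCommGroup E] [NormedSpace ℝ E]
    (n : ℕ) (ε : ℝ) (hε : 0 < ε)
    (f : ℝ → ℝ) (hf : ContDiffOn ℝ (n + 1) f (Set.Ico 0 ε))
    (u : ℝ → E) (U Uhat : ℕ → E) (P Phat : E)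
    (h₁ : (fun r : ℝ =>
        u r - ∑ k ∈ Icc 1 n, (((k.factorial : ℝ))⁻¹ * r ^ k) • U k
          - ((((n + 1).factorial : ℝ))⁻¹ * (r ^ (n + 1) * Real.log r)) • P)
      =O[𝓝[>] (0 : ℝ)] fun r => r ^ (n + 1))
    (h₂ : (fun r : ℝ =>
        u r - ∑ k ∈ Icc 1 n,
            (((k.factorial : ℝ))⁻¹ * (Real.exp (f r) * r) ^ k) • Uhat k
          - ((((n + 1).factorial : ℝ))⁻¹ *
              ((Real.exp (f r) * r) ^ (n + 1) * Real.log (Real.exp (f r) * r))) • Phat)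
      =O[𝓝[>] (0 : ℝ)] fun r => r ^ (n + 1)) :
    Phat = Real.exp (-((n : ℝ) + 1) * f 0) • P := by
  classical
  set b : ℝ := ε / 2 with hbdef
  have hb0 : 0 < b := by positivity
  have hbε : b < ε := by rw [hbdef]; linarith
  have hsub : Set.Icc (0 : ℝ) b ⊆ Set.Ico 0 ε := fun x hx => ⟨hx.1, lt_of_le_of_lt hx.2 hbε⟩
  have hmem : Set.Ioo (0 : ℝ) b ∈ 𝓝[>] (0 : ℝ) := Ioo_mem_nhdsGT_of_mem ⟨le_refl 0, hb0⟩
  set c : ℝ := ((n + 1).factorial : ℝ)⁻¹ with hcdef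
  set g : ℕ → ℝ → ℝ := fun k r => Real.exp ((k : ℝ) * f r) with hgdef
  have hgc : ∀ k : ℕ, ContDiffOn ℝ (n + 1) (g k) (Set.Icc 0 b) := by
    intro k
    exact (Real.contDiff_exp.of_le le_top).comp_contDiffOn
      (contDiffOn_const.mul (hf.mono hsub))
  set T : ℕ → ℝ → ℝ := fun k r => taylorWithinEval (g k) (n - k) (Set.Icc 0 b) 0 r with hTdef
  set R : ℕ → ℝ → ℝ := fun k r => g k r - T k r with hRdef
  have hRem : ∀ k : ℕ, ∃ C : ℝ, ∀ x ∈ Set.Icc (0 : ℝ) b, |R k x| ≤ C * x ^ (n - k + 1) := by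
    intro k
    obtain ⟨C, hC⟩ := exists_taylor_mean_remainder_bound hb0.le
      ((hgc k).of_le (by exact_mod_cast Nat.succ_le_succ (n.sub_le k)))
    refine ⟨C, fun x hx => ?_⟩
    have := hC x hx
    simpa [hRdef, hTdef, Real.norm_eq_abs, sub_zero] using this
  choose CR hCR using hRem
  -- bound on the variation of g (n+1)
  obtain ⟨CW, hCW⟩ := exists_taylor_mean_remainder_bound hb0.le
    ((hgc (n + 1)).of_le (by exact_mod_cast Nat.succ_le_succ (Nat.zero_le n)))
  have hCW' : ∀ x ∈ Set.Icc (0 : ℝ) b, |g (n + 1) x - g (n + 1) 0| ≤ CW * x := by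
    intro x hx
    have := hCW x hx
    simpa [Real.norm_eq_abs, sub_zero] using this
  -- bound on g (n+1) * f
  obtain ⟨M, hM⟩ := isCompact_Icc.exists_bound_of_continuousOn
    (((hgc (n + 1)).continuousOn.mul (hf.mono hsub).continuousOn) :
      ContinuousOn (fun r => g (n + 1) r * f r) (Set.Icc (0 : ℝ) b))
  set F : ℝ → E := fun r => (∑ k ∈ Icc 1 n, ((k.factorial : ℝ)⁻¹ * r ^ k) • U k)
      - ∑ k ∈ Icc 1 n, ((k.factorial : ℝ)⁻¹ * (T k r * r ^ k)) • Uhat k with hFdef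
  set B : E := c • P - (c * g (n + 1) 0) • Phat with hBdef
  -- F is a polynomial-type function
  have hFpoly : IsPolyFun n F := by
    refine IsPolyFun.sub ?_ ?_
    · refine isPolyFun_sum _ n _ (fun k hk => ?_)
      obtain ⟨hk1, hk2⟩ := Finset.mem_Icc.mp hk
      exact isPolyFun_monomial n k _ (U k) hk1 hk2
    · refine isPolyFun_sum _ n _ (fun k hk => ?_)
      obtain ⟨hk1, hk2⟩ := Finset.mem_Icc.mp hk
      have hTerm : (fun r : ℝ => ((k.factorial : ℝ)⁻¹ * (T k r * r ^ k)) • Uhat k)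
          = fun r : ℝ => ∑ i ∈ range (n - k + 1),
              (((k.factorial : ℝ)⁻¹ * ((i.factorial : ℝ)⁻¹ *
                iteratedDerivWithin i (g k) (Set.Icc 0 b) 0)) * r ^ (i + k)) • Uhat k := by
        funext r
        simp only [hTdef, taylor_within_apply, smul_eq_mul, sub_zero]
        rw [Finset.sum_mul, Finset.mul_sum, Finset.sum_smul]
        refine Finset.sum_congr rfl fun i hi => ?_
        congr 1
        rw [pow_add]; ring
      rw [hTerm]
      refine isPolyFun_sum _ n _ (fun i hi => ?_)
      have hi' := Finset.mem_range.mp hi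
      exact isPolyFun_monomial n (i + k) _ (Uhat k) (by omega) (by omega)
  -- the remainder sum is O(r^(n+1))
  have hRemO : (fun r : ℝ => ∑ k ∈ Icc 1 n, ((k.factorial : ℝ)⁻¹ * (R k r * r ^ k)) • Uhat k)
      =O[𝓝[>] (0 : ℝ)] fun r => r ^ (n + 1) := by
    refine IsBigO.fun_sum (fun k hk => ?_)
    obtain ⟨hk1, hk2⟩ := Finset.mem_Icc.mp hk
    refine isBigO_smul_const ?_ (Uhat k)
    rw [isBigO_iff]
    refine ⟨(k.factorial : ℝ)⁻¹ * CR k, ?_⟩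
    filter_upwards [hmem] with r hr
    have hr0 : 0 < r := hr.1
    have hrb : r ∈ Set.Icc (0 : ℝ) b := ⟨hr0.le, hr.2.le⟩
    have h1 := hCR k r hrb
    have hfk : (0 : ℝ) ≤ (k.factorial : ℝ)⁻¹ := by positivity
    have hrk : (0 : ℝ) ≤ r ^ k := by positivity
    have hpow : r ^ (n - k + 1) * r ^ k = r ^ (n + 1) := by
      rw [← pow_add]; congr 1; omega
    rw [Real.norm_eq_abs, Real.norm_eq_abs, abs_mul, abs_mul,
      abs_of_nonneg hfk, abs_of_nonneg hrk, abs_of_nonneg (by positivity : (0:ℝ) ≤ r ^ (n+1))]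
    calc (k.factorial : ℝ)⁻¹ * (|R k r| * r ^ k)
        ≤ (k.factorial : ℝ)⁻¹ * ((CR k * r ^ (n - k + 1)) * r ^ k) := by
          refine mul_le_mul_of_nonneg_left (mul_le_mul_of_nonneg_right h1 hrk) hfk
      _ = (k.factorial : ℝ)⁻¹ * CR k * r ^ (n + 1) := by
          rw [mul_assoc (CR k), hpow]; ring
  -- the middle term is O(r^(n+1))
  have hWO : (fun r : ℝ => ((r ^ (n + 1) * Real.log r) * (g (n + 1) r - g (n + 1) 0)) •
      (c • Phat)) =O[𝓝[>] (0 : ℝ)] fun r => r ^ (n + 1) := by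
    refine isBigO_smul_const ?_ (c • Phat)
    have hsmall : ∀ᶠ r in 𝓝[>] (0 : ℝ), |r * Real.log r| ≤ 1 := by
      have h := Real.continuous_mul_log.tendsto 0
      simp only [Real.log_zero, mul_zero] at h
      have h' := tendsto_nhdsWithin_of_tendsto_nhds (s := Set.Ioi (0:ℝ)) h
      have := Metric.tendsto_nhds.mp h' 1 one_pos
      filter_upwards [this] with r hrr
      rw [Real.dist_eq, sub_zero] at hrr
      exact hrr.le
    rw [isBigO_iff]
    refine ⟨CW, ?_⟩
    filter_upwards [hmem, hsmall] with r hr hsm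
    have hr0 : 0 < r := hr.1
    have hrb : r ∈ Set.Icc (0 : ℝ) b := ⟨hr0.le, hr.2.le⟩
    have h1 := hCW' r hrb
    have hrn : (0 : ℝ) ≤ r ^ n := by positivity
    have hCW0 : 0 ≤ CW * r := le_trans (abs_nonneg _) h1
    rw [Real.norm_eq_abs, Real.norm_eq_abs,
      abs_of_nonneg (by positivity : (0:ℝ) ≤ r ^ (n+1))]
    have hexpand : r ^ (n + 1) * Real.log r * (g (n + 1) r - g (n + 1) 0)
        = (r * Real.log r) * (r ^ n * (g (n + 1) r - g (n + 1) 0)) := by ring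
    rw [hexpand, abs_mul]
    calc |r * Real.log r| * |r ^ n * (g (n + 1) r - g (n + 1) 0)|
        ≤ 1 * (r ^ n * (CW * r)) := by
          refine mul_le_mul hsm ?_ (abs_nonneg _) zero_le_one
          rw [abs_mul, abs_of_nonneg hrn]
          exact mul_le_mul_of_nonneg_left h1 hrn
      _ = CW * (r ^ n * r) := by ring
      _ = CW * r ^ (n + 1) := by rw [pow_succ]
  -- the last term is O(r^(n+1))
  have hMO : (fun r : ℝ => (c * (g (n + 1) r * f r * r ^ (n + 1))) • Phat)
      =O[𝓝[>] (0 : ℝ)] fun r => r ^ (n + 1) := by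
    refine isBigO_smul_const ?_ Phat
    rw [isBigO_iff]
    refine ⟨|c| * M, ?_⟩
    filter_upwards [hmem] with r hr
    have hr0 : 0 < r := hr.1
    have hrb : r ∈ Set.Icc (0 : ℝ) b := ⟨hr0.le, hr.2.le⟩
    have h1 := hM r hrb
    rw [Real.norm_eq_abs] at h1 ⊢
    have hM0 : 0 ≤ M := le_trans (abs_nonneg _) h1
    rw [Real.norm_eq_abs, abs_of_nonneg (by positivity : (0:ℝ) ≤ r ^ (n+1))]
    have : |c * (g (n + 1) r * f r * r ^ (n + 1))|
        = |c| * (|g (n + 1) r * f r| * r ^ (n + 1)) := by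
      rw [abs_mul, abs_mul, abs_of_nonneg (by positivity : (0:ℝ) ≤ r ^ (n+1))]
    rw [this]
    calc |c| * (|g (n + 1) r * f r| * r ^ (n + 1))
        ≤ |c| * (M * r ^ (n + 1)) := by
          refine mul_le_mul_of_nonneg_left
            (mul_le_mul_of_nonneg_right h1 (by positivity)) (abs_nonneg c)
      _ = |c| * M * r ^ (n + 1) := by ring
  -- the total error term
  have hGO : (fun r : ℝ =>
      (∑ k ∈ Icc 1 n, ((k.factorial : ℝ)⁻¹ * (R k r * r ^ k)) • Uhat k)
      + ((r ^ (n + 1) * Real.log r) * (g (n + 1) r - g (n + 1) 0)) • (c • Phat)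
      + (c * (g (n + 1) r * f r * r ^ (n + 1))) • Phat)
      =O[𝓝[>] (0 : ℝ)] fun r => r ^ (n + 1) := (hRemO.add hWO).add hMO
  -- the key eventual identity
  have hId : ∀ᶠ r in 𝓝[>] (0 : ℝ),
      F r + (r ^ (n + 1) * Real.log r) • B
      = ((u r - ∑ k ∈ Icc 1 n,
            (((k.factorial : ℝ))⁻¹ * (Real.exp (f r) * r) ^ k) • Uhat k
          - ((((n + 1).factorial : ℝ))⁻¹ *
              ((Real.exp (f r) * r) ^ (n + 1) * Real.log (Real.exp (f r) * r))) • Phat)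
        - (u r - ∑ k ∈ Icc 1 n, (((k.factorial : ℝ))⁻¹ * r ^ k) • U k
          - ((((n + 1).factorial : ℝ))⁻¹ * (r ^ (n + 1) * Real.log r)) • P))
        + ((∑ k ∈ Icc 1 n, ((k.factorial : ℝ)⁻¹ * (R k r * r ^ k)) • Uhat k)
          + ((r ^ (n + 1) * Real.log r) * (g (n + 1) r - g (n + 1) 0)) • (c • Phat)
          + (c * (g (n + 1) r * f r * r ^ (n + 1))) • Phat) := by
    filter_upwards [hmem] with r hr
    have hr0 : 0 < r := hr.1
    have hS₂ : ∑ k ∈ Icc 1 n, (((k.factorial : ℝ))⁻¹ * (Real.exp (f r) * r) ^ k) • Uhat k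
        = (∑ k ∈ Icc 1 n, ((k.factorial : ℝ)⁻¹ * (T k r * r ^ k)) • Uhat k)
          + ∑ k ∈ Icc 1 n, ((k.factorial : ℝ)⁻¹ * (R k r * r ^ k)) • Uhat k := by
      rw [← Finset.sum_add_distrib]
      refine Finset.sum_congr rfl fun k hk => ?_
      rw [← add_smul]
      congr 1
      have hgk : (Real.exp (f r) * r) ^ k = g k r * r ^ k := by
        rw [mul_pow, hgdef]
        congr 1
        rw [← Real.exp_nat_mul]
      have hTR : T k r + R k r = g k r := by simp [hRdef]
      rw [hgk, ← hTR]; ring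
    have hgpow : (Real.exp (f r) * r) ^ (n + 1) = g (n + 1) r * r ^ (n + 1) := by
      rw [mul_pow, hgdef]
      congr 1
      rw [← Real.exp_nat_mul]
    have hlog : Real.log (Real.exp (f r) * r) = f r + Real.log r := by
      rw [Real.log_mul (Real.exp_ne_zero _) hr0.ne', Real.log_exp]
    rw [hS₂, hgpow, hlog, hFdef, hBdef, hcdef]
    simp only [smul_smul]
    module
  -- conclude
  have hKey : (fun r : ℝ => F r + (r ^ (n + 1) * Real.log r) • B)
      =O[𝓝[>] (0 : ℝ)] fun r => r ^ (n + 1) := by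
    refine ((h₂.sub h₁).add hGO).congr' ?_ EventuallyEq.rfl
    exact hId.mono fun r h => h.symm
  have hB0 : B = 0 := log_coeff_zero n F B hFpoly hKey
  have hc0 : c ≠ 0 := by
    rw [hcdef]
    exact inv_ne_zero (Nat.cast_ne_zero.mpr (Nat.factorial_ne_zero _))
  have hPeq : c • P = (c * g (n + 1) 0) • Phat := by
    rw [hBdef] at hB0
    exact sub_eq_zero.mp hB0
  have hg0 : g (n + 1) 0 = Real.exp (((n : ℝ) + 1) * f 0) := by
    rw [hgdef]
    push_cast
    ring_nf
  have hP : P = Real.exp (((n : ℝ) + 1) * f 0) • Phat := by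
    have := congrArg (fun x : E => c⁻¹ • x) hPeq
    simp only [smul_smul] at this
    rw [inv_mul_cancel₀ hc0, one_smul] at this
    rw [this, hg0]
    congr 1
    field_simp
  rw [hP, smul_smul, ← Real.exp_add]
  have : -((n : ℝ) + 1) * f 0 + ((n : ℝ) + 1) * f 0 = 0 := by ring
  rw [this, Real.exp_zero, one_smul]
end

section
/- Let E be a real normed vector space, n a natural number, and ε > 0. Let f : [0,ε) → ℝ be of class C^{n+1} and set r̂(r) = e^{f(r)} r. Suppose u : (0,ε) → E admits, as r → 0⁺, the two expansions u(r) = Σ_{k=1}^{n} (U_k/k!) r^k + (P/(n+1)!) r^{n+1} log r + O(r^{n+1}) and u(r) = Σ_{k=1}^{n} (Û_k/k!) r̂(r)^k + (P̂/(n+1)!) r̂(r)^{n+1} log r̂(r) + O(r^{n+1}), for some vectors U_1, …, U_n, P, Û_1, …, Û_n, P̂ ∈ E. Then P = 0 if and only if P̂ = 0. -/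
open Filter Topology Asymptotics Finset

-- scalar tendsto: r^(m+1) * log r → 0
lemma aux_tendsto_pow_log (m : ℕ) :
    Tendsto (fun r : ℝ => r ^ (m + 1) * Real.log r) (𝓝[>] (0:ℝ)) (𝓝 0) := by
  have h := tendsto_log_mul_rpow_nhdsGT_zero (r := (m + 1 : ℝ)) (by positivity)
  refine h.congr' ?_
  filter_upwards [self_mem_nhdsWithin] with r (hr : (0:ℝ) < r)
  rw [show ((m:ℝ)+1) = ((m+1 : ℕ) : ℝ) by push_cast; ring, Real.rpow_natCast]
  ring

-- cancel an r-factor in a big-O statement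
lemma aux_smul_cancel_isBigO {E : Type*} [NormedAddCommGroup E] [NormedSpace ℝ E]
    {F : ℝ → E} {m : ℕ}
    (h : (fun r : ℝ => r • F r) =O[𝓝[>] (0:ℝ)] fun r => r ^ (m + 1)) :
    F =O[𝓝[>] (0:ℝ)] fun r : ℝ => r ^ m := by
  rw [isBigO_iff] at h ⊢
  obtain ⟨C, hC⟩ := h
  refine ⟨C, ?_⟩
  filter_upwards [hC, self_mem_nhdsWithin] with r h1 (h2 : (0:ℝ) < r)
  rw [norm_smul, Real.norm_eq_abs, abs_of_pos h2, pow_succ, norm_mul,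
    Real.norm_eq_abs r, abs_of_pos h2, ← mul_assoc] at h1
  rw [mul_comm] at h1
  have := le_of_mul_le_mul_right h1 h2
  linarith [this]

lemma aux_smul_const_isBigO {E : Type*} [NormedAddCommGroup E] [NormedSpace ℝ E]
    {l : Filter ℝ} {c : E} {s g : ℝ → ℝ} (h : s =O[l] g) :
    (fun r => s r • c) =O[l] g := by
  rw [isBigO_iff] at h ⊢
  obtain ⟨C, hC⟩ := h
  refine ⟨C * ‖c‖, ?_⟩
  filter_upwards [hC] with r hr
  rw [norm_smul]
  calc ‖s r‖ * ‖c‖ ≤ (C * ‖g r‖) * ‖c‖ := mul_le_mul_of_nonneg_right hr (norm_nonneg c)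
    _ = C * ‖c‖ * ‖g r‖ := by ring

-- Key lemma A': polynomial + log term O-bound forces log coefficient to vanish
lemma aux_log_coeff_zero {E : Type*} [NormedAddCommGroup E] [NormedSpace ℝ E] :
    ∀ (n : ℕ) (V : ℕ → E) (Z : E),
      (fun r : ℝ => (∑ k ∈ range (n+1), r ^ k • V k) + (r ^ (n+1) * Real.log r) • Z)
        =O[𝓝[>] (0:ℝ)] (fun r => r ^ (n+1)) → Z = 0 := by
  intro n
  induction n with
  | zero =>
    intro V Z h
    have htendF : Tendsto (fun r : ℝ => (∑ k ∈ range 1, r ^ k • V k) + (r ^ 1 * Real.log r) • Z)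
        (𝓝[>] (0:ℝ)) (𝓝 (V 0)) := by
      have h1 : Tendsto (fun r : ℝ => (∑ k ∈ range 1, r ^ k • V k)) (𝓝[>] (0:ℝ)) (𝓝 (V 0)) := by
        simp only [range_one, sum_singleton, pow_zero, one_smul]
        exact tendsto_const_nhds
      have h2 : Tendsto (fun r : ℝ => (r ^ 1 * Real.log r) • Z) (𝓝[>] (0:ℝ)) (𝓝 0) := by
        simpa using (aux_tendsto_pow_log 0).smul_const Z
      simpa using h1.add h2
    have h0 : Tendsto (fun r : ℝ => (∑ k ∈ range 1, r ^ k • V k) + (r ^ 1 * Real.log r) • Z)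
        (𝓝[>] (0:ℝ)) (𝓝 0) := by
      refine h.trans_tendsto ?_
      have : Tendsto (fun r : ℝ => r ^ 1) (𝓝[>] (0:ℝ)) (𝓝 0) := by
        simpa using ((continuous_pow 1 (M := ℝ)).tendsto 0).mono_left (nhdsWithin_le_nhds (s := Set.Ioi (0:ℝ)))
      simpa using this
    have hV0 : V 0 = 0 := tendsto_nhds_unique htendF h0
    have h' : (fun r : ℝ => r • (Real.log r • Z)) =O[𝓝[>] (0:ℝ)] fun r => r ^ (0+1) := by
      refine h.congr_left fun r => ?_
      simp [hV0, smul_smul]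
    have hb := aux_smul_cancel_isBigO h'
    by_contra hZ
    have hZ' : 0 < ‖Z‖ := norm_pos_iff.mpr hZ
    rw [isBigO_iff] at hb
    obtain ⟨C, hC⟩ := hb
    have hlog : Tendsto (fun r : ℝ => |Real.log r| * ‖Z‖) (𝓝[>] (0:ℝ)) atTop :=
      (tendsto_abs_atBot_atTop.comp Real.tendsto_log_nhdsGT_zero).atTop_mul_const hZ'
    have hev : ∀ᶠ r in 𝓝[>] (0:ℝ), False := by
      filter_upwards [hC, hlog.eventually_gt_atTop C] with r h1 h2
      rw [norm_smul, Real.norm_eq_abs] at h1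
      simp only [pow_zero, norm_one, mul_one] at h1
      linarith
    exact hev.exists.elim fun _ hf => hf
  | succ n ih =>
    intro V Z h
    have htendF : Tendsto (fun r : ℝ =>
        (∑ k ∈ range (n+1+1), r ^ k • V k) + (r ^ (n+1+1) * Real.log r) • Z)
        (𝓝[>] (0:ℝ)) (𝓝 (V 0)) := by
      have h1 : Tendsto (fun r : ℝ => (∑ k ∈ range (n+1+1), r ^ k • V k)) (𝓝[>] (0:ℝ))
          (𝓝 (∑ k ∈ range (n+1+1), (0:ℝ) ^ k • V k)) := by
        refine Tendsto.mono_left ?_ (nhdsWithin_le_nhds)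
        exact ((continuous_finset_sum _ fun k _ => (continuous_pow k).smul continuous_const).tendsto 0)
      have hval : (∑ k ∈ range (n+1+1), (0:ℝ) ^ k • V k) = V 0 := by
        rw [Finset.sum_eq_single 0]
        · simp
        · intro k _ hk
          simp [zero_pow hk]
        · simp
      rw [hval] at h1
      have h2 : Tendsto (fun r : ℝ => (r ^ (n+1+1) * Real.log r) • Z) (𝓝[>] (0:ℝ)) (𝓝 0) := by
        simpa using (aux_tendsto_pow_log (n+1)).smul_const Z
      simpa using h1.add h2
    have h0 : Tendsto (fun r : ℝ =>
        (∑ k ∈ range (n+1+1), r ^ k • V k) + (r ^ (n+1+1) * Real.log r) • Z)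
        (𝓝[>] (0:ℝ)) (𝓝 0) := by
      refine h.trans_tendsto ?_
      have h3 := (continuous_pow (n+1+1) (M := ℝ)).tendsto 0
      simpa using h3.mono_left (nhdsWithin_le_nhds (s := Set.Ioi (0:ℝ)))
    have hV0 : V 0 = 0 := tendsto_nhds_unique htendF h0
    have hFG : ∀ r : ℝ, r • ((∑ j ∈ range (n+1), r ^ j • V (j+1)) + (r ^ (n+1) * Real.log r) • Z)
        = (∑ k ∈ range (n+1+1), r ^ k • V k) + (r ^ (n+1+1) * Real.log r) • Z := by
      intro r
      rw [Finset.sum_range_succ' (fun k => r ^ k • V k) (n+1)]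
      simp only [pow_zero, one_smul, hV0, add_zero, smul_add, Finset.smul_sum, smul_smul]
      congr 1
      · exact Finset.sum_congr rfl fun j _ => by rw [← pow_succ']
      · congr 1
        ring
    have hG' : (fun r : ℝ => r • ((∑ j ∈ range (n+1), r ^ j • V (j+1))
        + (r ^ (n+1) * Real.log r) • Z)) =O[𝓝[>] (0:ℝ)] fun r => r ^ (n+1+1) :=
      h.congr_left fun r => (hFG r).symm
    exact ih (fun j => V (j+1)) Z (aux_smul_cancel_isBigO hG')

/-- CR covariance of the log-term coefficient: if `u` admits the expansion
`u(r) = Σ_{k=1}^n (U_k/k!) r^k + (P/(n+1)!) r^{n+1} log r + O(r^{n+1})` and also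
the analogous expansion in the rescaled variable `r̂ = e^{f} r`, then the two
log coefficients vanish simultaneously: `P = 0 ↔ P̂ = 0`. -/
theorem log_coeff_vanishing_invariant
    {E : Type*} [NormedAddCommGroup E] [NormedSpace ℝ E]
    (n : ℕ) (ε : ℝ) (hε : 0 < ε)
    (f : ℝ → ℝ) (hf : ContDiffOn ℝ (n + 1) f (Set.Ico 0 ε))
    (u : ℝ → E) (U Uhat : ℕ → E) (P Phat : E)
    (h₁ : (fun r : ℝ =>
        u r - ∑ k ∈ Icc 1 n, (((k.factorial : ℝ))⁻¹ * r ^ k) • U k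
          - ((((n + 1).factorial : ℝ))⁻¹ * (r ^ (n + 1) * Real.log r)) • P)
      =O[𝓝[>] (0 : ℝ)] fun r => r ^ (n + 1))
    (h₂ : (fun r : ℝ =>
        u r - ∑ k ∈ Icc 1 n,
            (((k.factorial : ℝ))⁻¹ * (Real.exp (f r) * r) ^ k) • Uhat k
          - ((((n + 1).factorial : ℝ))⁻¹ *
              ((Real.exp (f r) * r) ^ (n + 1) * Real.log (Real.exp (f r) * r))) • Phat)
      =O[𝓝[>] (0 : ℝ)] fun r => r ^ (n + 1)) :
    P = 0 ↔ Phat = 0 := by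
  set δ : ℝ := ε / 2 with hδdef
  have hδ : 0 < δ := half_pos hε
  have hδε : δ < ε := half_lt_self hε
  have hsub : Set.Icc (0:ℝ) δ ⊆ Set.Ico 0 ε := fun x hx => ⟨hx.1, lt_of_le_of_lt hx.2 hδε⟩
  have hIccmem : Set.Icc (0:ℝ) δ ∈ 𝓝[>] (0:ℝ) :=
    Icc_mem_nhdsGT_of_mem ⟨le_refl 0, hδ⟩
  -- the smooth part S and the log coefficient Z, remainder R
  set S : ℝ → E := fun r =>
      (∑ k ∈ Icc 1 n, (((k.factorial : ℝ))⁻¹ * (Real.exp (f r) * r) ^ k) • Uhat k)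
      - (∑ k ∈ Icc 1 n, (((k.factorial : ℝ))⁻¹ * r ^ k) • U k)
      + ((((n + 1).factorial : ℝ))⁻¹ * ((Real.exp (f r) * r) ^ (n + 1) * f r)) • Phat
    with hSdef
  set Z : E := ((((n + 1).factorial : ℝ))⁻¹ * (Real.exp (f 0)) ^ (n + 1)) • Phat
      - ((((n + 1).factorial : ℝ))⁻¹) • P with hZdef
  set R : ℝ → E := fun r =>
      ((((n + 1).factorial : ℝ))⁻¹ * ((Real.exp (f r)) ^ (n + 1) - (Real.exp (f 0)) ^ (n + 1))
        * (r ^ (n + 1) * Real.log r)) • Phat with hRdef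
  -- R is O(r^(n+1))
  have hfd : DifferentiableOn ℝ f (Set.Ico 0 ε) :=
    hf.differentiableOn (by simp)
  have hgd : DifferentiableWithinAt ℝ (fun r => (Real.exp (f r)) ^ (n + 1)) (Set.Ico 0 ε) 0 :=
    ((hfd 0 ⟨le_refl 0, hε⟩).exp).pow (n + 1)
  have hle : 𝓝[>] (0:ℝ) ≤ 𝓝[Set.Ico 0 ε] (0:ℝ) :=
    nhdsWithin_le_iff.mpr (mem_of_superset hIccmem hsub)
  have hgO : (fun r => (Real.exp (f r)) ^ (n + 1) - (Real.exp (f 0)) ^ (n + 1))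
      =O[𝓝[>] (0:ℝ)] (fun r : ℝ => r) := by
    have h1 := hgd.hasFDerivWithinAt.isBigO_sub
    have h2 := h1.mono hle
    exact h2.congr_right fun x => sub_zero x
  have hrlog : (fun r : ℝ => r * Real.log r) =O[𝓝[>] (0:ℝ)] (fun _ => (1:ℝ)) := by
    exact ((aux_tendsto_pow_log 0).isBigO_one ℝ).congr_left fun r => by norm_num
  have hR : R =O[𝓝[>] (0:ℝ)] fun r : ℝ => r ^ (n + 1) := by
    rw [hRdef]
    apply aux_smul_const_isBigO
    have hprod : (fun r : ℝ => ((Real.exp (f r)) ^ (n + 1) - (Real.exp (f 0)) ^ (n + 1))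
        * (r * Real.log r)) =O[𝓝[>] (0:ℝ)] (fun r : ℝ => r * 1) := hgO.mul hrlog
    have hfull := hprod.mul (isBigO_refl (fun r : ℝ => r ^ n) (𝓝[>] (0:ℝ)))
    have hfull2 := hfull.const_mul_left ((((n + 1).factorial : ℝ))⁻¹)
    have hfull' : (fun r : ℝ => (((n + 1).factorial : ℝ))⁻¹ *
        ((Real.exp (f r)) ^ (n + 1) - (Real.exp (f 0)) ^ (n + 1)) * (r ^ (n + 1) * Real.log r))
        =O[𝓝[>] (0:ℝ)] (fun r : ℝ => r * 1 * r ^ n) :=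
      hfull2.congr_left fun r => by ring
    exact hfull'.congr_right fun r => by ring
  -- key big-O statement for S + log term
  have hKey : (fun r : ℝ => S r + (r ^ (n + 1) * Real.log r) • Z)
      =O[𝓝[>] (0:ℝ)] fun r : ℝ => r ^ (n + 1) := by
    have hdiff := (h₁.sub h₂).sub hR
    refine hdiff.congr' ?_ EventuallyEq.rfl
    filter_upwards [self_mem_nhdsWithin] with r (hr : (0:ℝ) < r)
    have hlog : Real.log (Real.exp (f r) * r) = f r + Real.log r := by
      rw [Real.log_mul (Real.exp_ne_zero _) (ne_of_gt hr), Real.log_exp]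
    have hpow : (Real.exp (f r) * r) ^ (n + 1) = Real.exp (f r) ^ (n + 1) * r ^ (n + 1) :=
      mul_pow _ _ _
    simp only [hSdef, hZdef, hRdef]
    rw [hlog, hpow]
    module
  -- Taylor expansion of S
  have hfδ : ContDiffOn ℝ (↑n + 1) f (Set.Icc 0 δ) := hf.mono hsub
  have hX : ContDiffOn ℝ (↑n + 1) (fun r : ℝ => Real.exp (f r) * r) (Set.Icc 0 δ) :=
    ((Real.contDiff_exp.of_le le_top).comp_contDiffOn hfδ).mul contDiffOn_id
  have hS : ContDiffOn ℝ (↑n + 1) S (Set.Icc 0 δ) := by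
    rw [hSdef]
    refine ContDiffOn.add (ContDiffOn.sub ?_ ?_) ?_
    · exact ContDiffOn.sum fun k _ => (contDiffOn_const.mul (hX.pow k)).smul contDiffOn_const
    · exact ContDiffOn.sum fun k _ =>
        (contDiffOn_const.mul (contDiffOn_id.pow k)).smul contDiffOn_const
    · exact (contDiffOn_const.mul ((hX.pow (n+1)).mul hfδ)).smul contDiffOn_const
  obtain ⟨C, hC⟩ := exists_taylor_mean_remainder_bound hδ.le hS
  have hTaylor : (fun r => S r - taylorWithinEval S n (Set.Icc 0 δ) 0 r)
      =O[𝓝[>] (0:ℝ)] fun r : ℝ => r ^ (n + 1) := by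
    rw [isBigO_iff]
    refine ⟨C, ?_⟩
    filter_upwards [hIccmem, self_mem_nhdsWithin] with r hrI (hr : (0:ℝ) < r)
    have := hC r hrI
    rw [sub_zero] at this
    calc ‖S r - taylorWithinEval S n (Set.Icc 0 δ) 0 r‖ ≤ C * r ^ (n+1) := this
      _ = C * ‖r ^ (n+1)‖ := by
          rw [Real.norm_eq_abs, abs_of_pos (pow_pos hr _)]
  have key : (fun r : ℝ =>
      (∑ k ∈ range (n+1), r ^ k • ((k.factorial : ℝ)⁻¹ • iteratedDerivWithin k S (Set.Icc 0 δ) 0))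
        + (r ^ (n+1) * Real.log r) • Z) =O[𝓝[>] (0:ℝ)] fun r : ℝ => r ^ (n + 1) := by
    have h4 := hKey.sub hTaylor
    refine h4.congr_left fun r => ?_
    have e1 : ∀ (a b c : E), (a + b) - (a - c) = c + b := fun a b c => by abel
    rw [e1, taylor_within_apply]
    congr 1
    refine Finset.sum_congr rfl fun k _ => ?_
    rw [sub_zero, smul_smul, mul_comm]
  have hZ0 : Z = 0 := aux_log_coeff_zero n _ Z key
  -- conclude
  have hc : ((((n+1).factorial : ℝ))⁻¹) ≠ 0 :=
    inv_ne_zero (Nat.cast_ne_zero.mpr (Nat.factorial_ne_zero _))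
  have h5 : ((((n + 1).factorial : ℝ))⁻¹ * Real.exp (f 0) ^ (n + 1)) • Phat
      = ((((n + 1).factorial : ℝ))⁻¹) • P := by
    rw [hZdef] at hZ0
    exact sub_eq_zero.mp hZ0
  have hP : Real.exp (f 0) ^ (n + 1) • Phat = P := by
    have h6 : ((((n + 1).factorial : ℝ))⁻¹) • (Real.exp (f 0) ^ (n + 1) • Phat)
        = ((((n + 1).factorial : ℝ))⁻¹) • P := by rw [smul_smul, h5]
    exact smul_right_injective E hc h6
  have he : Real.exp (f 0) ^ (n + 1) ≠ 0 := pow_ne_zero _ (Real.exp_ne_zero _)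
  constructor
  · intro hP0
    have : Real.exp (f 0) ^ (n + 1) • Phat = 0 := by rw [hP, hP0]
    rcases smul_eq_zero.mp this with h | h
    · exact absurd h he
    · exact h
  · intro hP0
    rw [← hP, hP0, smul_zero]
end

section
/- Let E be a real normed vector space, let n ≥ 1 be a natural number, and let F : ℝ → E be of class C^{n+2} with F(0) = 0. Define u_k = F^{(k)}(0) / (k! · k · (n−k+1)) for 1 ≤ k ≤ n, p = − F^{(n+1)}(0) / ((n+1)! · (n+1)), and u(r) = Σ_{k=1}^{n} u_k r^k + p r^{n+1} log r for r > 0. Then, as r → 0⁺, n r u'(r) − r² u''(r) − F(r) = O(r^{n+2}). Moreover (u_1, …, u_n, p) is the unique tuple of vectors in E for which the function of this form satisfies this estimate. -/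
open Filter Topology Asymptotics Finset

/-- The model indicial operator `L u (r) = n r u'(r) - r² u''(r)`. -/
noncomputable def modelOp {E : Type*} [NormedAddCommGroup E] [NormedSpace ℝ E]
    (n : ℕ) (u : ℝ → E) : ℝ → E :=
  fun r => ((n : ℝ) * r) • deriv u r - (r ^ 2) • deriv (deriv u) r

/-- The model solution `u(r) = Σ_{k=1}^n u_k r^k + p r^{n+1} log r` built from a
tuple of coefficients `(u_1, …, u_n, p)`. -/
noncomputable def modelSol {E : Type*} [NormedAddCommGroup E] [NormedSpace ℝ E]
    (n : ℕ) (u : ℕ → E) (p : E) : ℝ → E :=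
  fun r => (∑ k ∈ Icc 1 n, (r ^ k) • u k) + (r ^ (n + 1) * Real.log r) • p

section Aux
variable {E : Type*} [NormedAddCommGroup E] [NormedSpace ℝ E]

lemma iteratedDerivWithin_eq_iteratedDeriv' {N : ℕ} {F : ℝ → E}
    (hF : ContDiff ℝ (N : ℕ∞) F) {s : Set ℝ} (hs : UniqueDiffOn ℝ s) {x : ℝ}
    (hx : x ∈ s) {m : ℕ} (hm : m ≤ N) :
    iteratedDerivWithin m F s x = iteratedDeriv m F x := by
  have h := (contDiff_iff_ftaylorSeries.mp hF).hasFTaylorSeriesUpToOn s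
  have h2 := h.eq_iteratedFDerivWithin_of_uniqueDiffOn (by exact_mod_cast hm) hs hx
  rw [iteratedDerivWithin_eq_iteratedFDerivWithin, iteratedDeriv_eq_iteratedFDeriv, ← h2]
  rfl

lemma taylor_isBigO (N : ℕ) (F : ℝ → E) (hF : ContDiff ℝ ((N : ℕ) + 1) F) :
    (fun r : ℝ => F r -
        ∑ k ∈ range (N + 1), (((k.factorial : ℝ))⁻¹ * r ^ k) • iteratedDeriv k F 0)
      =O[𝓝[>] (0 : ℝ)] fun r => r ^ (N + 1) := by
  have hFO : ContDiffOn ℝ ((N : ℕ) + 1) F (Set.Icc 0 1) := hF.contDiffOn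
  obtain ⟨C, hC⟩ := exists_taylor_mean_remainder_bound (a := (0:ℝ)) (b := 1)
    zero_le_one hFO
  rw [isBigO_iff]
  refine ⟨C, ?_⟩
  filter_upwards [Ioc_mem_nhdsGT (zero_lt_one (α := ℝ))] with r hr
  have hr1 : r ∈ Set.Icc (0:ℝ) 1 := ⟨hr.1.le, hr.2⟩
  have h1 := hC r hr1
  rw [taylor_within_apply] at h1
  have hsum : ∀ k ∈ range (N + 1),
      (((k.factorial : ℝ))⁻¹ * (r - 0) ^ k) • iteratedDerivWithin k F (Set.Icc 0 1) 0
        = (((k.factorial : ℝ))⁻¹ * r ^ k) • iteratedDeriv k F 0 := by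
    intro k hk
    rw [iteratedDerivWithin_eq_iteratedDeriv' (N := N + 1) (by exact_mod_cast hF)
      (uniqueDiffOn_Icc zero_lt_one)
      (Set.left_mem_Icc.2 zero_le_one) (by simp at hk; omega), sub_zero]
  rw [Finset.sum_congr rfl hsum, sub_zero] at h1
  calc ‖F r - ∑ k ∈ range (N + 1), (((k.factorial : ℝ))⁻¹ * r ^ k) • iteratedDeriv k F 0‖
      ≤ C * r ^ (N + 1) := h1
    _ ≤ C * ‖r ^ (N + 1)‖ := by
        rw [Real.norm_eq_abs, abs_of_pos (pow_pos hr.1 _)]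

lemma coeffs_vanish (N : ℕ) :
    ∀ d a, N + 1 = a + d → ∀ c : ℕ → E,
      ((fun r : ℝ => ∑ k ∈ Icc a N, (r ^ k) • c k) =O[𝓝[>] (0 : ℝ)]
        fun r => r ^ (N + 1)) →
      ∀ k ∈ Icc a N, c k = 0 := by
  intro d
  induction d with
  | zero =>
    intro a ha c _ k hk
    simp only [Finset.mem_Icc] at hk
    omega
  | succ d ih =>
    intro a ha c hO k hk
    simp only [Finset.mem_Icc] at hk
    have haN : a ≤ N := by omega
    -- step 1 : c a = 0
    have heq : ∀ᶠ r in 𝓝[>] (0 : ℝ),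
        (r ^ a)⁻¹ • (∑ k ∈ Icc a N, (r ^ k) • c k)
          = ∑ k ∈ Icc a N, (r ^ (k - a)) • c k := by
      filter_upwards [self_mem_nhdsWithin] with r (hr : 0 < r)
      rw [Finset.smul_sum]
      refine Finset.sum_congr rfl fun k hk => ?_
      simp only [Finset.mem_Icc] at hk
      rw [smul_smul]
      congr 1
      have : r ^ k = r ^ a * r ^ (k - a) := by
        rw [← pow_add]; congr 1; omega
      rw [this, inv_mul_cancel_left₀ (pow_ne_zero _ hr.ne')]
    have h1 : Tendsto (fun r : ℝ => ∑ k ∈ Icc a N, (r ^ (k - a)) • c k)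
        (𝓝[>] (0 : ℝ)) (𝓝 (c a)) := by
      have hcont : Continuous (fun r : ℝ => ∑ k ∈ Icc a N, (r ^ (k - a)) • c k) :=
        continuous_finset_sum _ fun k _ => (continuous_pow _).smul continuous_const
      have hval : (∑ k ∈ Icc a N, ((0:ℝ) ^ (k - a)) • c k) = c a := by
        rw [Finset.sum_eq_single a]
        · simp
        · intro k hk hka
          simp only [Finset.mem_Icc] at hk
          rw [zero_pow (by omega : k - a ≠ 0), zero_smul]
        · intro h
          exact absurd (Finset.mem_Icc.2 ⟨le_refl a, haN⟩) h
      have h0 := (hcont.tendsto 0).mono_left (nhdsWithin_le_nhds (s := Set.Ioi (0:ℝ)))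
      simpa [hval] using h0
    have h2 : (fun r : ℝ => (r ^ a)⁻¹ • (∑ k ∈ Icc a N, (r ^ k) • c k))
        =O[𝓝[>] (0 : ℝ)] fun r : ℝ => (r ^ a)⁻¹ * r ^ (N + 1) :=
      (isBigO_refl (fun r : ℝ => (r ^ a)⁻¹) _).smul hO
    have h3 : (fun r : ℝ => (r ^ a)⁻¹ * r ^ (N + 1)) =ᶠ[𝓝[>] (0 : ℝ)]
        fun r : ℝ => r ^ (d + 1) := by
      filter_upwards [self_mem_nhdsWithin] with r (hr : 0 < r)
      have : r ^ (N + 1) = r ^ a * r ^ (d + 1) := by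
        rw [ha, pow_add]
      rw [this, inv_mul_cancel_left₀ (pow_ne_zero _ hr.ne')]
    have h4 : Tendsto (fun r : ℝ => ∑ k ∈ Icc a N, (r ^ (k - a)) • c k)
        (𝓝[>] (0 : ℝ)) (𝓝 0) := by
      have h5 : Tendsto (fun r : ℝ => r ^ (d + 1)) (𝓝[>] (0 : ℝ)) (𝓝 (0:ℝ)) := by
        have := ((continuous_pow (d+1)).tendsto (0:ℝ)).mono_left
          (nhdsWithin_le_nhds (s := Set.Ioi (0:ℝ)))
        simpa using this
      exact ((h2.congr' heq h3).trans_tendsto h5)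
    have hca : c a = 0 := tendsto_nhds_unique h1 h4
    rcases eq_or_lt_of_le hk.1 with rfl | hak
    · exact hca
    · have hsplit : ∀ r : ℝ, (∑ k ∈ Icc a N, (r ^ k) • c k)
          = ∑ k ∈ Icc (a + 1) N, (r ^ k) • c k := by
        intro r
        rw [Finset.Icc_add_one_left_eq_Ioc, ← Finset.Icc_erase_left]
        exact (Finset.sum_erase _ (by rw [hca, smul_zero])).symm
      exact ih (a + 1) (by omega) c
        (hO.congr' (Filter.Eventually.of_forall fun r => hsplit r)
          (EventuallyEq.refl _ _)) k (Finset.mem_Icc.2 ⟨hak, hk.2⟩)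

/-- First derivative data of `modelSol` for `r > 0`. -/
noncomputable def modelSolD {E : Type*} [NormedAddCommGroup E] [NormedSpace ℝ E]
    (n : ℕ) (v : ℕ → E) (q : E) : ℝ → E :=
  fun r => (∑ k ∈ Icc 1 n, ((k : ℝ) * r ^ (k - 1)) • v k)
    + ((((n : ℝ) + 1) * r ^ n) * Real.log r + r ^ (n + 1) * r⁻¹) • q

lemma hasDerivAt_modelSol (n : ℕ) (v : ℕ → E) (q : E) {r : ℝ} (hr : 0 < r) :
    HasDerivAt (modelSol n v q) (modelSolD n v q r) r := by
  unfold modelSol modelSolD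
  refine HasDerivAt.add (HasDerivAt.fun_sum fun k _ => ?_) ?_
  · have h := (hasDerivAt_pow k r).smul_const (v k)
    simpa using h
  · have h := ((hasDerivAt_pow (n + 1) r).mul (Real.hasDerivAt_log hr.ne')).smul_const q
    simpa [mul_comm] using h

noncomputable def modelSolD2 {E : Type*} [NormedAddCommGroup E] [NormedSpace ℝ E]
    (n : ℕ) (v : ℕ → E) (q : E) : ℝ → E :=
  fun r => (∑ k ∈ Icc 1 n, ((k : ℝ) * (((k - 1 : ℕ) : ℝ) * r ^ (k - 1 - 1))) • v k)
    + ((((n : ℝ) + 1) * ((n : ℝ) * r ^ (n - 1)) * Real.log r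
          + ((n : ℝ) + 1) * r ^ n * r⁻¹)
        + (((n : ℝ) + 1) * r ^ n * r⁻¹ + r ^ (n + 1) * (-(r ^ 2)⁻¹))) • q

lemma hasDerivAt_modelSolD (n : ℕ) (v : ℕ → E) (q : E) {r : ℝ} (hr : 0 < r) :
    HasDerivAt (modelSolD n v q) (modelSolD2 n v q r) r := by
  unfold modelSolD modelSolD2
  refine HasDerivAt.add (HasDerivAt.fun_sum fun k _ => ?_) ?_
  · have h := (((hasDerivAt_pow (k - 1) r)).const_mul (k : ℝ)).smul_const (v k)
    simpa using h
  · have h1 : HasDerivAt (fun x : ℝ => (((n : ℝ) + 1) * x ^ n) * Real.log x)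
        (((n : ℝ) + 1) * ((n : ℝ) * r ^ (n - 1)) * Real.log r
          + ((n : ℝ) + 1) * r ^ n * r⁻¹) r := by
      have := (((hasDerivAt_pow n r)).const_mul ((n : ℝ) + 1)).fun_mul (Real.hasDerivAt_log hr.ne')
      simpa [mul_assoc] using this
    have h2 : HasDerivAt (fun x : ℝ => x ^ (n + 1) * x⁻¹)
        (((n : ℝ) + 1) * r ^ n * r⁻¹ + r ^ (n + 1) * (-(r ^ 2)⁻¹)) r := by
      have := (hasDerivAt_pow (n + 1) r).fun_mul (hasDerivAt_inv hr.ne')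
      simpa [pow_two, mul_assoc] using this
    have h := (h1.add h2).smul_const q
    simpa [mul_assoc] using h

lemma modelOp_modelSol (n : ℕ) (hn : 1 ≤ n) (v : ℕ → E) (q : E) {r : ℝ} (hr : 0 < r) :
    modelOp n (modelSol n v q) r
      = (∑ k ∈ Icc 1 n, ((k : ℝ) * ((n : ℝ) - (k : ℝ) + 1) * r ^ k) • v k)
        - (((n : ℝ) + 1) * r ^ (n + 1)) • q := by
  have hd1 : deriv (modelSol n v q) r = modelSolD n v q r :=
    (hasDerivAt_modelSol n v q hr).deriv
  have hev : deriv (modelSol n v q) =ᶠ[𝓝 r] modelSolD n v q := by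
    filter_upwards [Ioi_mem_nhds hr] with x hx
    exact (hasDerivAt_modelSol n v q hx).deriv
  have hd2 : deriv (deriv (modelSol n v q)) r = modelSolD2 n v q r := by
    rw [hev.deriv_eq]; exact (hasDerivAt_modelSolD n v q hr).deriv
  show ((n : ℝ) * r) • deriv (modelSol n v q) r
      - (r ^ 2) • deriv (deriv (modelSol n v q)) r = _
  rw [hd1, hd2]
  unfold modelSolD modelSolD2
  rw [smul_add, smul_add, add_sub_add_comm, Finset.smul_sum, Finset.smul_sum,
    ← Finset.sum_sub_distrib]
  have hsum : ∑ k ∈ Icc 1 n,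
      (((n : ℝ) * r) • (((k : ℝ) * r ^ (k - 1)) • v k)
        - (r ^ 2) • (((k : ℝ) * (((k - 1 : ℕ) : ℝ) * r ^ (k - 1 - 1))) • v k))
      = ∑ k ∈ Icc 1 n, ((k : ℝ) * ((n : ℝ) - (k : ℝ) + 1) * r ^ k) • v k := by
    refine Finset.sum_congr rfl fun k hk => ?_
    simp only [Finset.mem_Icc] at hk
    rw [smul_smul, smul_smul, ← sub_smul]
    congr 1
    obtain ⟨m, rfl⟩ : ∃ m, k = m + 1 := ⟨k - 1, by omega⟩
    cases m with
    | zero => simp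
    | succ j =>
      simp only [Nat.add_sub_cancel]
      push_cast
      ring
  have hq : ((n : ℝ) * r) • ((((n : ℝ) + 1) * r ^ n * Real.log r + r ^ (n + 1) * r⁻¹) • q)
      - (r ^ 2) • ((((n : ℝ) + 1) * ((n : ℝ) * r ^ (n - 1)) * Real.log r
            + ((n : ℝ) + 1) * r ^ n * r⁻¹
          + (((n : ℝ) + 1) * r ^ n * r⁻¹ + r ^ (n + 1) * (-(r ^ 2)⁻¹))) • q)
      = -((((n : ℝ) + 1) * r ^ (n + 1)) • q) := by
    rw [smul_smul, smul_smul, ← neg_smul, ← sub_smul]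
    congr 1
    obtain ⟨m, rfl⟩ : ∃ m, n = m + 1 := ⟨n - 1, by omega⟩
    simp only [Nat.add_sub_cancel]
    field_simp
    ring
  rw [hsum, hq, ← sub_eq_add_neg]

end Aux

/-- Solvability with log obstruction for the model indicial operator: given
`F` of class `C^{n+2}` with `F(0) = 0`, the function
`u(r) = Σ_{k=1}^n (F^{(k)}(0)/(k!·k·(n-k+1))) r^k
      - (F^{(n+1)}(0)/((n+1)!·(n+1))) r^{n+1} log r`
satisfies `L u - F = O(r^{n+2})` as `r → 0⁺`, and `(u_1, …, u_n, p)` is the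
unique tuple of coefficients with this property. -/
theorem modelOp_solvability_with_obstruction
    {E : Type*} [NormedAddCommGroup E] [NormedSpace ℝ E]
    (n : ℕ) (hn : 1 ≤ n) (F : ℝ → E)
    (hF : ContDiff ℝ (n + 2) F) (hF0 : F 0 = 0) :
    ((fun r : ℝ =>
        modelOp n (modelSol n
          (fun k => (((k.factorial : ℝ)) * (k : ℝ) * ((n : ℝ) - (k : ℝ) + 1))⁻¹ •
            iteratedDeriv k F 0)
          (-((((n + 1).factorial : ℝ)) * ((n : ℝ) + 1))⁻¹ •
            iteratedDeriv (n + 1) F 0)) r - F r)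
      =O[𝓝[>] (0 : ℝ)] fun r => r ^ (n + 2))
    ∧ (∀ (v : ℕ → E) (q : E),
        ((fun r : ℝ => modelOp n (modelSol n v q) r - F r)
          =O[𝓝[>] (0 : ℝ)] fun r => r ^ (n + 2)) →
        (∀ k, 1 ≤ k → k ≤ n →
          v k = (((k.factorial : ℝ)) * (k : ℝ) * ((n : ℝ) - (k : ℝ) + 1))⁻¹ •
            iteratedDeriv k F 0)
        ∧ q = -((((n + 1).factorial : ℝ)) * ((n : ℝ) + 1))⁻¹ •
            iteratedDeriv (n + 1) F 0) := by

  have hT := taylor_isBigO (N := n + 1) F (by exact_mod_cast hF)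
  set u : ℕ → E := fun k =>
    (((k.factorial : ℝ)) * (k : ℝ) * ((n : ℝ) - (k : ℝ) + 1))⁻¹ • iteratedDeriv k F 0 with hu
  set p : E :=
    -((((n + 1).factorial : ℝ)) * ((n : ℝ) + 1))⁻¹ • iteratedDeriv (n + 1) F 0 with hp
  have key : ∀ r : ℝ, 0 < r → modelOp n (modelSol n u p) r
      = ∑ k ∈ range (n + 1 + 1), (((k.factorial : ℝ))⁻¹ * r ^ k) • iteratedDeriv k F 0 := by
    intro r hr
    rw [modelOp_modelSol n hn u p hr, Finset.range_eq_Ico, Finset.Ico_add_one_right_eq_Icc,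
      Finset.sum_Icc_succ_top (Nat.zero_le _)]
    have hbot : ∑ k ∈ Icc 0 n, (((k.factorial : ℝ))⁻¹ * r ^ k) • iteratedDeriv k F 0
        = ∑ k ∈ Icc 1 n, (((k.factorial : ℝ))⁻¹ * r ^ k) • iteratedDeriv k F 0 := by
      rw [show (1 : ℕ) = 0 + 1 from rfl, Finset.Icc_add_one_left_eq_Ioc, ← Finset.Icc_erase_left]
      exact (Finset.sum_erase _ (by simp [iteratedDeriv_zero, hF0])).symm
    rw [hbot, sub_eq_add_neg]
    congr 1
    · refine Finset.sum_congr rfl fun k hk => ?_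
      simp only [Finset.mem_Icc] at hk
      rw [hu, smul_smul]
      congr 1
      have hk0 : (k : ℝ) ≠ 0 := Nat.cast_ne_zero.2 (by omega)
      have hkf : ((k.factorial : ℝ)) ≠ 0 := Nat.cast_ne_zero.2 k.factorial_ne_zero
      have hnk : (n : ℝ) - (k : ℝ) + 1 ≠ 0 := by
        have : (k : ℝ) ≤ (n : ℝ) := Nat.cast_le.2 hk.2
        linarith
      field_simp
    · rw [hp, neg_smul, smul_neg, neg_neg, smul_smul]
      congr 1
      have h1 : ((n : ℝ) + 1) ≠ 0 := by positivity
      have h2 : (((n + 1).factorial : ℝ)) ≠ 0 := Nat.cast_ne_zero.2 (n + 1).factorial_ne_zero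
      field_simp
  have hfwd : (fun r : ℝ => modelOp n (modelSol n u p) r - F r)
      =O[𝓝[>] (0 : ℝ)] fun r => r ^ (n + 2) := by
    have heq : (fun r : ℝ => modelOp n (modelSol n u p) r - F r)
        =ᶠ[𝓝[>] (0 : ℝ)] fun r => -(F r -
          ∑ k ∈ range (n + 1 + 1), (((k.factorial : ℝ))⁻¹ * r ^ k) • iteratedDeriv k F 0) := by
      filter_upwards [self_mem_nhdsWithin] with r hr
      rw [key r hr, neg_sub]
    exact hT.neg_left.congr' heq.symm (EventuallyEq.refl _ _)
  refine ⟨hfwd, fun v q hvq => ?_⟩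
  have hdiff := hvq.sub hfwd
  set c : ℕ → E := fun k => if k ≤ n then ((k : ℝ) * ((n : ℝ) - (k : ℝ) + 1)) • (v k - u k)
    else (-((n : ℝ) + 1)) • (q - p) with hc
  have hOc : (fun r : ℝ => ∑ k ∈ Icc 1 (n + 1), (r ^ k) • c k)
      =O[𝓝[>] (0 : ℝ)] fun r => r ^ (n + 1 + 1) := by
    refine hdiff.congr' ?_ (EventuallyEq.refl _ _)
    filter_upwards [self_mem_nhdsWithin] with r hr
    rw [sub_sub_sub_cancel_right, modelOp_modelSol n hn v q hr, modelOp_modelSol n hn u p hr,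
      Finset.sum_Icc_succ_top (by omega : 1 ≤ n + 1)]
    have hterm : ∀ k ∈ Icc 1 n, (r ^ k) • c k
        = ((k : ℝ) * ((n : ℝ) - (k : ℝ) + 1) * r ^ k) • v k
          - ((k : ℝ) * ((n : ℝ) - (k : ℝ) + 1) * r ^ k) • u k := by
      intro k hk
      simp only [Finset.mem_Icc] at hk
      rw [hc]
      simp only [if_pos hk.2]
      rw [smul_smul, mul_comm, smul_sub]
    have htop : (r ^ (n + 1)) • c (n + 1)
        = (((n : ℝ) + 1) * r ^ (n + 1)) • p - (((n : ℝ) + 1) * r ^ (n + 1)) • q := by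
      rw [hc]
      simp only [if_neg (by omega : ¬ n + 1 ≤ n)]
      rw [smul_smul, smul_sub]
      rw [show r ^ (n + 1) * -((n : ℝ) + 1) = -(((n : ℝ) + 1) * r ^ (n + 1)) by ring]
      rw [neg_smul, neg_smul, neg_sub_neg]
    rw [Finset.sum_congr rfl hterm, htop, Finset.sum_sub_distrib]
    abel
  have hzero := coeffs_vanish (n + 1) (n + 1) 1 (by omega) c hOc
  constructor
  · intro k hk1 hk2
    have h := hzero k (Finset.mem_Icc.2 ⟨hk1, by omega⟩)
    rw [hc] at h
    simp only [if_pos hk2] at h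
    have hk0 : (k : ℝ) ≠ 0 := Nat.cast_ne_zero.2 (by omega)
    have hnk : (n : ℝ) - (k : ℝ) + 1 ≠ 0 := by
      have : (k : ℝ) ≤ (n : ℝ) := Nat.cast_le.2 hk2
      linarith
    rcases smul_eq_zero.mp h with h' | h'
    · exact absurd h' (mul_ne_zero hk0 hnk)
    · exact sub_eq_zero.mp h'
  · have h := hzero (n + 1) (Finset.mem_Icc.2 ⟨by omega, le_refl _⟩)
    rw [hc] at h
    simp only [if_neg (by omega : ¬ n + 1 ≤ n)] at h
    have h1 : -((n : ℝ) + 1) ≠ 0 := by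
      have : (0 : ℝ) < (n : ℝ) + 1 := by positivity
      linarith
    rcases smul_eq_zero.mp h with h' | h'
    · exact absurd h' h1
    · exact sub_eq_zero.mp h'
end

section
/- Let E be a real normed vector space, let n ≥ 1 be a natural number, and let F : ℝ → E be of class C^{n+2} with F(0) = 0. Then there exist vectors v_1, …, v_{n+1} ∈ E such that the polynomial v(r) = Σ_{k=1}^{n+1} v_k r^k satisfies n r v'(r) − r² v''(r) − F(r) = O(r^{n+2}) as r → 0⁺ if and only if F^{(n+1)}(0) = 0. In that case the coefficients v_1, …, v_n are uniquely determined, namely v_k = F^{(k)}(0)/(k! · k · (n−k+1)), while v_{n+1} may be chosen arbitrarily. -/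
open Filter Topology Asymptotics Finset

/-- The polynomial `v(r) = Σ_{k=1}^{n+1} v_k r^k` built from the coefficients
`v_1, …, v_{n+1}`. -/
noncomputable def polySol {E : Type*} [NormedAddCommGroup E] [NormedSpace ℝ E]
    (n : ℕ) (v : ℕ → E) : ℝ → E :=
  fun r => ∑ k ∈ Icc 1 (n + 1), (r ^ k) • v k

section AuxLemmas
variable {E : Type*} [NormedAddCommGroup E] [NormedSpace ℝ E]

/-- If a polynomial `Σ_{k<m} c_k r^k` is `O(r^m)` as `r → 0⁺`, all its coefficients vanish. -/
lemma poly_isBigO_coeff_zero :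
    ∀ (m : ℕ) (c : ℕ → E),
      ((fun r : ℝ => ∑ k ∈ range m, (r ^ k) • c k) =O[𝓝[>] (0 : ℝ)] fun r => r ^ m) →
      ∀ k < m, c k = 0 := by
  intro m
  induction m with
  | zero => intro c _ k hk; exact absurd hk (Nat.not_lt_zero k)
  | succ m ih =>
    intro c h k hk
    have hcont : ContinuousAt (fun r : ℝ => ∑ k ∈ range (m + 1), (r ^ k) • c k) 0 :=
      (continuous_finset_sum _ fun i _ => (continuous_pow i).smul continuous_const).continuousAt
    have hval : (∑ k ∈ range (m + 1), ((0 : ℝ) ^ k) • c k) = c 0 := by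
      rw [Finset.sum_eq_single_of_mem 0 (Finset.mem_range.2 (Nat.succ_pos m))]
      · simp
      · intro i _ hi
        rw [zero_pow hi, zero_smul]
    have htend0 : Tendsto (fun r : ℝ => ∑ k ∈ range (m + 1), (r ^ k) • c k)
        (𝓝[>] (0 : ℝ)) (𝓝 (c 0)) := by
      have := hcont.tendsto.mono_left (nhdsWithin_le_nhds (s := Set.Ioi (0:ℝ)))
      rwa [hval] at this
    have hz : Tendsto (fun r : ℝ => ∑ k ∈ range (m + 1), (r ^ k) • c k)
        (𝓝[>] (0 : ℝ)) (𝓝 0) := by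
      refine h.trans_tendsto ?_
      have := ((continuous_pow (m + 1)).tendsto (0 : ℝ)).mono_left
        (nhdsWithin_le_nhds (s := Set.Ioi (0:ℝ)))
      rwa [zero_pow (Nat.succ_ne_zero m)] at this
    have h0 : c 0 = 0 := tendsto_nhds_unique htend0 hz
    rcases k with _ | k
    · exact h0
    have hshift : (fun r : ℝ => ∑ k ∈ range m, (r ^ k) • c (k + 1))
        =O[𝓝[>] (0 : ℝ)] fun r => r ^ m := by
      rw [isBigO_iff] at h ⊢
      obtain ⟨C, hC⟩ := h
      refine ⟨C, ?_⟩
      filter_upwards [hC, self_mem_nhdsWithin] with r hr hrpos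
      have hrpos' : (0 : ℝ) < r := hrpos
      have key : (∑ k ∈ range (m + 1), (r ^ k) • c k)
          = r • ∑ k ∈ range m, (r ^ k) • c (k + 1) := by
        rw [Finset.sum_range_succ', h0, Finset.smul_sum]
        simp only [pow_zero, smul_zero, add_zero]
        refine Finset.sum_congr rfl fun i _ => ?_
        rw [smul_smul, pow_succ']
      rw [key, norm_smul, Real.norm_eq_abs, abs_of_pos hrpos'] at hr
      have hnorm : ‖r ^ (m + 1)‖ = r * ‖r ^ m‖ := by
        rw [norm_pow, norm_pow, Real.norm_eq_abs, abs_of_pos hrpos', pow_succ']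
      rw [hnorm, ← mul_assoc, mul_comm C r, mul_assoc] at hr
      exact le_of_mul_le_mul_left hr hrpos'
    exact ih (fun k => c (k + 1)) hshift k (by omega)

/-- On `Icc 0 1`, iterated derivatives within the set at `0` agree with the global
iterated derivatives, for sufficiently smooth functions. -/
lemma iterWithin_eq {f : ℝ → E} {N : ℕ} (hf : ContDiff ℝ (N : ℕ) f) {k : ℕ} (hk : k ≤ N) :
    iteratedDerivWithin k f (Set.Icc (0 : ℝ) 1) 0 = iteratedDeriv k f 0 := by
  have hf' : ContDiff ℝ ((N : ℕ∞) : WithTop ℕ∞) f := by exact_mod_cast hf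
  have h := (contDiff_iff_ftaylorSeries.mp hf').hasFTaylorSeriesUpToOn (Set.Icc (0 : ℝ) 1)
  have heq := h.eq_iteratedFDerivWithin_of_uniqueDiffOn (m := k) (by exact_mod_cast hk)
    (uniqueDiffOn_Icc one_pos)
    (show (0:ℝ) ∈ Set.Icc (0:ℝ) 1 from Set.mem_Icc.mpr ⟨le_refl 0, zero_le_one⟩)
  rw [iteratedDerivWithin_eq_iteratedFDerivWithin, iteratedDeriv_eq_iteratedFDeriv, ← heq]
  rfl

/-- Taylor's theorem as a one-sided `O(r^{m+1})` estimate at `0`. -/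
lemma taylor_bigO {F : ℝ → E} (m : ℕ) (hF : ContDiff ℝ ((m + 1 : ℕ) : WithTop ℕ∞) F) :
    (fun r : ℝ => F r - ∑ k ∈ range (m + 1), ((k.factorial : ℝ)⁻¹ * r ^ k) • iteratedDeriv k F 0)
      =O[𝓝[>] (0 : ℝ)] fun r => r ^ (m + 1) := by
  have hco : ContDiffOn ℝ ((m : WithTop ℕ∞) + 1) F (Set.Icc 0 1) := by
    have : ContDiff ℝ ((m : WithTop ℕ∞) + 1) F := by exact_mod_cast hF
    exact this.contDiffOn
  obtain ⟨C, hC⟩ := exists_taylor_mean_remainder_bound (a := 0) (b := 1) zero_le_one hco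
  rw [isBigO_iff]
  refine ⟨C, ?_⟩
  filter_upwards [Ioo_mem_nhdsGT_of_mem (Set.left_mem_Ico.2 one_pos)] with r hr
  have hr' : r ∈ Set.Icc (0 : ℝ) 1 := Set.mem_Icc.2 ⟨hr.1.le, hr.2.le⟩
  have := hC r hr'
  rw [taylor_within_apply] at this
  have hrw : (∑ k ∈ range (m + 1), ((k.factorial : ℝ)⁻¹ * (r - 0) ^ k) •
      iteratedDerivWithin k F (Set.Icc 0 1) 0)
      = ∑ k ∈ range (m + 1), ((k.factorial : ℝ)⁻¹ * r ^ k) • iteratedDeriv k F 0 := by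
    refine Finset.sum_congr rfl fun k hk => ?_
    rw [sub_zero, iterWithin_eq hF (by have := Finset.mem_range.mp hk; omega)]
  rw [hrw, sub_zero] at this
  calc ‖F r - ∑ k ∈ range (m + 1), ((k.factorial : ℝ)⁻¹ * r ^ k) • iteratedDeriv k F 0‖
      ≤ C * r ^ (m + 1) := this
    _ = C * ‖r ^ (m + 1)‖ := by
        rw [norm_pow, Real.norm_eq_abs, abs_of_pos hr.1]

/-- Explicit computation of the model operator on the polynomial `polySol`. -/
lemma modelOp_polySol (n : ℕ) (v : ℕ → E) (r : ℝ) :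
    modelOp n (polySol n v) r
      = ∑ k ∈ Icc 1 (n + 1), (((k : ℝ) * ((n : ℝ) - (k : ℝ) + 1)) * r ^ k) • v k := by
  have hd1 : deriv (polySol n v)
      = fun r : ℝ => ∑ k ∈ Icc 1 (n + 1), ((k : ℝ) * r ^ (k - 1)) • v k := by
    funext r
    unfold polySol
    rw [deriv_fun_sum (fun i _ => (differentiableAt_pow i).smul_const (v i))]
    refine Finset.sum_congr rfl fun k _ => ?_
    rw [deriv_smul_const (differentiableAt_pow k), deriv_pow_field]
  have hd2 : deriv (deriv (polySol n v))
      = fun r : ℝ => ∑ k ∈ Icc 1 (n + 1),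
          ((k : ℝ) * (((k - 1 : ℕ) : ℝ) * r ^ (k - 1 - 1))) • v k := by
    rw [hd1]
    funext r
    rw [deriv_fun_sum (fun i _ => (((differentiableAt_pow (i - 1)).const_mul _)).smul_const (v i))]
    refine Finset.sum_congr rfl fun k _ => ?_
    rw [deriv_smul_const ((differentiableAt_pow _).const_mul _),
      deriv_const_mul _ (differentiableAt_pow _), deriv_pow_field]
  unfold modelOp
  rw [hd2, hd1]
  simp only [Finset.smul_sum, smul_smul]
  rw [← Finset.sum_sub_distrib]
  refine Finset.sum_congr rfl fun k hk => ?_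
  rw [← sub_smul]
  congr 1
  obtain ⟨hk1, _⟩ := Finset.mem_Icc.mp hk
  obtain ⟨j, rfl⟩ : ∃ j, k = j + 1 := ⟨k - 1, (Nat.succ_pred_eq_of_pos hk1).symm⟩
  simp only [Nat.add_sub_cancel]
  match j with
  | 0 => push_cast; ring
  | (i + 1) =>
    simp only [Nat.add_sub_cancel]
    push_cast
    ring

/-- The central characterization: the `O(r^{n+2})` estimate holds iff the indicial
equations `k(n-k+1) v_k = F^{(k)}(0)/k!` hold for all `1 ≤ k ≤ n+1`. -/
lemma key_iff (n : ℕ) (F : ℝ → E) (hF : ContDiff ℝ (n + 2) F) (hF0 : F 0 = 0) (v : ℕ → E) :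
    ((fun r : ℝ => modelOp n (polySol n v) r - F r) =O[𝓝[>] (0 : ℝ)] fun r => r ^ (n + 2))
    ↔ ∀ k ∈ Icc 1 (n + 1),
        ((k : ℝ) * ((n : ℝ) - (k : ℝ) + 1)) • v k = (k.factorial : ℝ)⁻¹ • iteratedDeriv k F 0 := by
  set c : ℕ → E := fun k =>
    ((k : ℝ) * ((n : ℝ) - (k : ℝ) + 1)) • v k - (k.factorial : ℝ)⁻¹ • iteratedDeriv k F 0 with hc
  set T : ℝ → E := fun r =>
    ∑ k ∈ range (n + 2), ((k.factorial : ℝ)⁻¹ * r ^ k) • iteratedDeriv k F 0 with hTdef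
  have hT : (fun r : ℝ => F r - T r) =O[𝓝[>] (0 : ℝ)] fun r => r ^ (n + 2) := by
    have hF' : ContDiff ℝ (((n + 1) + 1 : ℕ) : WithTop ℕ∞) F := by exact_mod_cast hF
    exact taylor_bigO (n + 1) hF'
  have hc0 : c 0 = 0 := by
    simp [hc, iteratedDeriv_zero, hF0]
  have hsum : ∀ r : ℝ, (∑ k ∈ range (n + 2), (r ^ k) • c k)
      = modelOp n (polySol n v) r - T r := by
    intro r
    have e1 : (∑ k ∈ Icc 1 (n + 1), (((k : ℝ) * ((n : ℝ) - (k : ℝ) + 1)) * r ^ k) • v k)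
        = ∑ k ∈ range (n + 2), (((k : ℝ) * ((n : ℝ) - (k : ℝ) + 1)) * r ^ k) • v k := by
      refine Finset.sum_subset ?_ ?_
      · intro x hx
        have := Finset.mem_Icc.mp hx
        exact Finset.mem_range.mpr (by omega)
      · intro x hxr hxn
        have hx0 : x = 0 := by
          have := Finset.mem_range.mp hxr
          simp only [Finset.mem_Icc] at hxn
          omega
        subst hx0
        simp
    rw [modelOp_polySol, e1, hTdef, ← Finset.sum_sub_distrib]
    refine Finset.sum_congr rfl fun k _ => ?_
    simp only [hc, smul_sub, smul_smul, mul_comm]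
  constructor
  · intro hO k hk
    have hsum' : (fun r : ℝ => ∑ k ∈ range (n + 2), (r ^ k) • c k)
        = fun r => (modelOp n (polySol n v) r - F r) + (F r - T r) := by
      funext r; rw [hsum]; abel
    have hbig : (fun r : ℝ => ∑ k ∈ range (n + 2), (r ^ k) • c k)
        =O[𝓝[>] (0 : ℝ)] fun r => r ^ (n + 2) := by
      rw [hsum']; exact hO.add hT
    have hzero := poly_isBigO_coeff_zero (n + 2) c hbig k
      (by have := Finset.mem_Icc.mp hk; omega)
    exact sub_eq_zero.mp hzero
  · intro hcoef
    have hzero : ∀ k ∈ range (n + 2), (fun r : ℝ => (r ^ k) • c k) = fun _ => (0 : E) := by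
      intro k hk
      funext r
      rcases Nat.eq_zero_or_pos k with rfl | hk1
      · rw [hc0, smul_zero]
      · have : c k = 0 := sub_eq_zero.mpr
          (hcoef k (Finset.mem_Icc.mpr ⟨hk1, by have := Finset.mem_range.mp hk; omega⟩))
        rw [this, smul_zero]
    have hfun : (fun r : ℝ => modelOp n (polySol n v) r - F r)
        = fun r => (∑ k ∈ range (n + 2), (r ^ k) • c k) - (F r - T r) := by
      funext r; rw [hsum]; abel
    rw [hfun]
    have hzsum : (fun r : ℝ => ∑ k ∈ range (n + 2), (r ^ k) • c k) = fun _ => (0 : E) := by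
      funext r
      exact Finset.sum_eq_zero fun k hk => congrFun (hzero k hk) r
    refine IsBigO.sub ?_ hT
    rw [hzsum]
    exact isBigO_zero _ _

end AuxLemmas

/-- Characterization of log-free solvability for the model indicial operator:
a polynomial `v(r) = Σ_{k=1}^{n+1} v_k r^k` with `L v - F = O(r^{n+2})` exists
iff `F^{(n+1)}(0) = 0`; in that case `v_1, …, v_n` are uniquely determined by
`v_k = F^{(k)}(0)/(k!·k·(n-k+1))` while `v_{n+1}` may be chosen arbitrarily. -/
theorem modelOp_logfree_solvability_iff
    {E : Type*} [NormedAddCommGroup E] [NormedSpace ℝ E]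
    (n : ℕ) (hn : 1 ≤ n) (F : ℝ → E)
    (hF : ContDiff ℝ (n + 2) F) (hF0 : F 0 = 0) :
    ((∃ v : ℕ → E,
        (fun r : ℝ => modelOp n (polySol n v) r - F r)
          =O[𝓝[>] (0 : ℝ)] fun r => r ^ (n + 2))
      ↔ iteratedDeriv (n + 1) F 0 = 0)
    ∧ (∀ v : ℕ → E,
        ((fun r : ℝ => modelOp n (polySol n v) r - F r)
          =O[𝓝[>] (0 : ℝ)] fun r => r ^ (n + 2)) →
        ∀ k, 1 ≤ k → k ≤ n →
          v k = (((k.factorial : ℝ)) * (k : ℝ) * ((n : ℝ) - (k : ℝ) + 1))⁻¹ •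
            iteratedDeriv k F 0)
    ∧ (iteratedDeriv (n + 1) F 0 = 0 →
        ∀ v : ℕ → E,
        (∀ k, 1 ≤ k → k ≤ n →
          v k = (((k.factorial : ℝ)) * (k : ℝ) * ((n : ℝ) - (k : ℝ) + 1))⁻¹ •
            iteratedDeriv k F 0) →
        (fun r : ℝ => modelOp n (polySol n v) r - F r)
          =O[𝓝[>] (0 : ℝ)] fun r => r ^ (n + 2)) := by
  have key := fun v : ℕ → E => key_iff n F hF hF0 v
  have h3 : iteratedDeriv (n + 1) F 0 = 0 →
      ∀ v : ℕ → E,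
      (∀ k, 1 ≤ k → k ≤ n →
        v k = (((k.factorial : ℝ)) * (k : ℝ) * ((n : ℝ) - (k : ℝ) + 1))⁻¹ •
          iteratedDeriv k F 0) →
      (fun r : ℝ => modelOp n (polySol n v) r - F r)
        =O[𝓝[>] (0 : ℝ)] fun r => r ^ (n + 2) := by
    intro hD v hv
    refine (key v).mpr ?_
    intro k hk
    obtain ⟨hk1, hk2⟩ := Finset.mem_Icc.mp hk
    by_cases hkn : k ≤ n
    · rw [hv k hk1 hkn, smul_smul]
      congr 1
      have hkpos : (0:ℝ) < (k:ℝ) := by exact_mod_cast hk1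
      have hnk : (0:ℝ) < (n:ℝ) - (k:ℝ) + 1 := by
        have : (k:ℝ) ≤ (n:ℝ) := by exact_mod_cast hkn
        linarith
      have hfac : (k.factorial : ℝ) ≠ 0 := by exact_mod_cast k.factorial_ne_zero
      field_simp
    · have hk' : k = n + 1 := by omega
      subst hk'
      have hcoef : (((n+1:ℕ)):ℝ) * ((n:ℝ) - (((n+1:ℕ)):ℝ) + 1) = 0 := by push_cast; ring
      rw [hcoef, zero_smul, hD, smul_zero]
  refine ⟨⟨?_, ?_⟩, ?_, h3⟩
  · rintro ⟨v, hO⟩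
    have h := (key v).mp hO (n + 1) (Finset.mem_Icc.mpr ⟨by omega, le_refl _⟩)
    have hcoef : (((n+1:ℕ)):ℝ) * ((n:ℝ) - (((n+1:ℕ)):ℝ) + 1) = 0 := by push_cast; ring
    rw [hcoef, zero_smul] at h
    have hfac : ((n+1).factorial : ℝ)⁻¹ ≠ 0 :=
      inv_ne_zero (by exact_mod_cast (n+1).factorial_ne_zero)
    rcases smul_eq_zero.mp h.symm with h' | h'
    · exact absurd h' hfac
    · exact h'
  · intro hD
    exact ⟨fun k => (((k.factorial : ℝ)) * (k : ℝ) * ((n : ℝ) - (k : ℝ) + 1))⁻¹ •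
      iteratedDeriv k F 0, h3 hD _ (fun k _ _ => rfl)⟩
  · intro v hO k hk1 hk2
    have h := (key v).mp hO k (Finset.mem_Icc.mpr ⟨hk1, by omega⟩)
    have hkpos : (0:ℝ) < (k:ℝ) := by exact_mod_cast hk1
    have hnk : (0:ℝ) < (n:ℝ) - (k:ℝ) + 1 := by
      have : (k:ℝ) ≤ (n:ℝ) := by exact_mod_cast hk2
      linarith
    have hfac : (k.factorial : ℝ) ≠ 0 := by exact_mod_cast k.factorial_ne_zero
    set a := (k:ℝ) * ((n:ℝ) - (k:ℝ) + 1) with ha_def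
    have ha : a ≠ 0 := ne_of_gt (mul_pos hkpos hnk)
    have hv : v k = a⁻¹ • ((k.factorial : ℝ)⁻¹ • iteratedDeriv k F 0) := by
      rw [← h, smul_smul, inv_mul_cancel₀ ha, one_smul]
    rw [hv, smul_smul]
    congr 1
    rw [ha_def]
    field_simp
end
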